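/- Suppose b, α, β₁, β₂, k₁, k₂ are all strictly positive and A > 0 solves equation (E). Then the point λ₁₇(A) = (b/(b+β₁A), bβ₁A/((b+β₁A)(b+α)), αbβ₁A/((b+β₁A)(b+β₂A)(b+α)), αβ₁β₂A²/((b+β₁A)(b+β₂A)(b+α))) lies in S³ and is a fixed point of V; moreover its infection force k₁·(second coordinate) + k₂·(fourth coordinate) equals A. -/
import Mathlib


/-- The discrete-time SISI epidemic operator. -/
noncomputable def sisiV (b α β₁ β₂ k₁ k₂ : ℝ) (p : ℝ × ℝ × ℝ × ℝ) : ℝ × ℝ × ℝ × ℝ :=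
  (p.1 + b - b * p.1 - β₁ * (k₁ * p.2.1 + k₂ * p.2.2.2) * p.1,
   p.2.1 - b * p.2.1 - α * p.2.1 + β₁ * (k₁ * p.2.1 + k₂ * p.2.2.2) * p.1,
   p.2.2.1 - b * p.2.2.1 + α * p.2.1 - β₂ * (k₁ * p.2.1 + k₂ * p.2.2.2) * p.2.2.1,
   p.2.2.2 - b * p.2.2.2 + β₂ * (k₁ * p.2.1 + k₂ * p.2.2.2) * p.2.2.1)

/-- The simplex S³ in ℝ⁴. -/
def simplexS3 : Set (ℝ × ℝ × ℝ × ℝ) :=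
  {p | 0 ≤ p.1 ∧ 0 ≤ p.2.1 ∧ 0 ≤ p.2.2.1 ∧ 0 ≤ p.2.2.2 ∧
       p.1 + p.2.1 + p.2.2.1 + p.2.2.2 = 1}

/-- Equation (E) in the unknown A. -/
def eqE (b α β₁ β₂ k₁ k₂ A : ℝ) : Prop :=
  1 = b * β₁ * k₁ / ((b + β₁ * A) * (b + α)) +
      α * β₁ * β₂ * k₂ * A / ((b + β₁ * A) * (b + β₂ * A) * (b + α))

/-- The interior fixed point candidate λ₁₇(A). -/
noncomputable def lam17 (b α β₁ β₂ A : ℝ) : ℝ × ℝ × ℝ × ℝ :=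
  (b / (b + β₁ * A),
   b * β₁ * A / ((b + β₁ * A) * (b + α)),
   α * b * β₁ * A / ((b + β₁ * A) * (b + β₂ * A) * (b + α)),
   α * β₁ * β₂ * A ^ 2 / ((b + β₁ * A) * (b + β₂ * A) * (b + α)))

theorem lam17_is_fixed_point (b α β₁ β₂ k₁ k₂ A : ℝ)
    (hb : 0 < b) (hα : 0 < α) (hβ₁ : 0 < β₁) (hβ₂ : 0 < β₂)
    (hk₁ : 0 < k₁) (hk₂ : 0 < k₂)
    (hA : 0 < A) (hE : eqE b α β₁ β₂ k₁ k₂ A) :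
    lam17 b α β₁ β₂ A ∈ simplexS3 ∧
    sisiV b α β₁ β₂ k₁ k₂ (lam17 b α β₁ β₂ A) = lam17 b α β₁ β₂ A ∧
    k₁ * (lam17 b α β₁ β₂ A).2.1 + k₂ * (lam17 b α β₁ β₂ A).2.2.2 = A := by
  have hD1 : 0 < b + β₁ * A := by positivity
  have hD2 : 0 < b + β₂ * A := by positivity
  have hD3 : 0 < b + α := by positivity
  have hD1' := hD1.ne'
  have hD2' := hD2.ne'
  have hD3' := hD3.ne'
  have hforce : k₁ * (lam17 b α β₁ β₂ A).2.1 + k₂ * (lam17 b α β₁ β₂ A).2.2.2 = A := by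
    rw [eqE] at hE
    simp only [lam17]
    field_simp at hE ⊢
    nlinarith [hE]
  refine ⟨?_, ?_, hforce⟩
  · simp only [simplexS3, lam17, Set.mem_setOf_eq]
    refine ⟨by positivity, by positivity, by positivity, by positivity, ?_⟩
    field_simp
    ring
  · simp only [lam17, sisiV] at hforce ⊢
    rw [hforce]
    refine Prod.ext ?_ (Prod.ext ?_ (Prod.ext ?_ ?_)) <;> · field_simp; ring
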